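/- For any symmetric Laurent polynomial P (a polynomial in the power sums p_k, k ∈ ℤ∖{0}), there exist constants a, b > 0 such that for all n, all ζ ∈ ℂⁿ, and all subsets J ⊆ {1,…,n}: |∂_J P(e^{ζ})| ≤ aⁿ · E(Re ζ)^b, where ∂_J denotes the mixed first partial derivative ∏_{j∈J} ∂/∂ζ_j and E(θ) = Σ_{j=1}^n cosh θ_j. -/

import Mathlib

open Finset

/-- The mixed first-order partial derivative `∂_J f` of a function
`f : ℂⁿ → ℂ`, for a (duplicate-free) list `J` of coordinate indices. -/
noncomputable def mixedPartial {n : ℕ} : List (Fin n) → ((Fin n → ℂ) → ℂ) → ((Fin n → ℂ) → ℂ)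
  | [], f => f
  | (i :: l), f => fun ζ =>
      deriv (fun t : ℂ => mixedPartial l f (Function.update ζ i t)) (ζ i)

/-- A symmetric Laurent polynomial `P ∈ Λ^±` is a polynomial in the power sums
`p_k`, `k ∈ ℤ∖{0}`; we encode it as a polynomial in variables indexed by
`{k : ℤ // k ≠ 0}`, the variable `k` standing for `p_k`, so that evaluation on
`e^ζ = (e^{ζ₁},…,e^{ζₙ})` substitutes `p_k ↦ Σ_j e^{k ζ_j}`. -/
noncomputable def evalLaurent (P : MvPolynomial {k : ℤ // k ≠ 0} ℂ) {n : ℕ}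
    (ζ : Fin n → ℂ) : ℂ :=
  MvPolynomial.eval (fun k : {k : ℤ // k ≠ 0} => ∑ j : Fin n, Complex.exp ((k.1 : ℂ) * ζ j)) P

namespace LaurentAux

abbrev K : Type := {k : ℤ // k ≠ 0}

abbrev Var (n : ℕ) : Type := K ⊕ (K × Fin n)

/-- Evaluation of the extended variable set: `inl k` is the power sum `p_k(e^ζ)`,
`inr (k, j)` is `e^{k ζ_j}`. -/
noncomputable def V {n : ℕ} (ζ : Fin n → ℂ) : Var n → ℂ
  | Sum.inl k => ∑ j : Fin n, Complex.exp ((k.1 : ℂ) * ζ j)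
  | Sum.inr kj => Complex.exp ((kj.1.1 : ℂ) * ζ kj.2)

/-- Formal partial derivative of each variable with respect to `ζ_j`. -/
noncomputable def dvar {n : ℕ} (j : Fin n) : Var n → MvPolynomial (Var n) ℂ
  | Sum.inl k => (k.1 : ℂ) • MvPolynomial.X (Sum.inr (k, j))
  | Sum.inr kj =>
      if kj.2 = j then (kj.1.1 : ℂ) • MvPolynomial.X (Sum.inr (kj.1, j)) else 0

/-- The formal derivation `∂/∂ζ_j` on the extended polynomial ring. -/
noncomputable def Dop {n : ℕ} (j : Fin n) :
    Derivation ℂ (MvPolynomial (Var n) ℂ) (MvPolynomial (Var n) ℂ) :=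
  MvPolynomial.mkDerivation ℂ (dvar j)

lemma hasDerivAt_V {n : ℕ} (ζ : Fin n → ℂ) (j : Fin n) (t₀ : ℂ) (v : Var n) :
    HasDerivAt (fun t => V (Function.update ζ j t) v)
      (MvPolynomial.eval (V (Function.update ζ j t₀)) (dvar j v)) t₀ := by
  cases v with
  | inl k =>
      have h : ∀ j' : Fin n, j' ∈ (univ : Finset (Fin n)) → HasDerivAt
          (fun t : ℂ => Complex.exp ((k.1 : ℂ) * Function.update ζ j t j'))
          (if j' = j then (k.1 : ℂ) * Complex.exp ((k.1 : ℂ) * t₀) else 0) t₀ := by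
        intro j' _
        by_cases hj : j' = j
        · subst hj
          simp only [Function.update_self, if_pos rfl]
          have := (((hasDerivAt_id t₀).const_mul ((k.1 : ℂ)))).cexp
          simpa [mul_comm] using this
        · simp only [Function.update_of_ne hj, if_neg hj]
          exact hasDerivAt_const _ _
      have hs := HasDerivAt.fun_sum h
      have hsum : (∑ j' : Fin n, if j' = j then (k.1 : ℂ) * Complex.exp ((k.1 : ℂ) * t₀) else 0)
          = (k.1 : ℂ) * Complex.exp ((k.1 : ℂ) * t₀) := by
        rw [Finset.sum_ite_eq' univ j (fun _ => (k.1 : ℂ) * Complex.exp ((k.1 : ℂ) * t₀))]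
        simp
      rw [hsum] at hs
      have : MvPolynomial.eval (V (Function.update ζ j t₀)) (dvar j (Sum.inl k))
          = (k.1 : ℂ) * Complex.exp ((k.1 : ℂ) * t₀) := by
        simp [dvar, V, Function.update_self]
      rw [this]
      exact hs
  | inr kj =>
      obtain ⟨k, j'⟩ := kj
      by_cases hj : j' = j
      · subst hj
        have h := (((hasDerivAt_id t₀).const_mul ((k.1 : ℂ)))).cexp
        have he : MvPolynomial.eval (V (Function.update ζ j' t₀)) (dvar j' (Sum.inr (k, j')))
            = (k.1 : ℂ) * Complex.exp ((k.1 : ℂ) * t₀) := by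
          simp [dvar, V, Function.update_self]
        rw [he]
        have h2 : (fun t : ℂ => V (Function.update ζ j' t) (Sum.inr (k, j')))
            = fun t : ℂ => Complex.exp ((k.1 : ℂ) * t) := by
          funext t; simp [V, Function.update_self]
        rw [h2]
        simpa [mul_comm] using h
      · have h2 : (fun t : ℂ => V (Function.update ζ j t) (Sum.inr (k, j')))
            = fun _ : ℂ => Complex.exp ((k.1 : ℂ) * ζ j') := by
          funext t; simp [V, Function.update_of_ne hj]
        rw [h2]
        have : MvPolynomial.eval (V (Function.update ζ j t₀)) (dvar j (Sum.inr (k, j'))) = 0 := by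
          simp [dvar, if_neg hj]
        rw [this]
        exact hasDerivAt_const _ _

lemma hasDerivAt_eval {n : ℕ} (Q : MvPolynomial (Var n) ℂ) (ζ : Fin n → ℂ) (j : Fin n)
    (t₀ : ℂ) :
    HasDerivAt (fun t => MvPolynomial.eval (V (Function.update ζ j t)) Q)
      (MvPolynomial.eval (V (Function.update ζ j t₀)) (Dop j Q)) t₀ := by
  induction Q using MvPolynomial.induction_on with
  | C a =>
      have hD : Dop j (MvPolynomial.C a) = 0 := by
        rw [← MvPolynomial.algebraMap_eq]
        exact Derivation.map_algebraMap _ a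
      simp only [hD, MvPolynomial.eval_C, map_zero]
      exact hasDerivAt_const _ _
  | add p q hp hq =>
      have := hp.fun_add hq
      simpa [map_add] using this
  | mul_X p v hp =>
      have hX := hasDerivAt_V ζ j t₀ v
      have h2 := hp.mul hX
      have e1 : (fun t => MvPolynomial.eval (V (Function.update ζ j t))
            (p * MvPolynomial.X v))
          = fun t => MvPolynomial.eval (V (Function.update ζ j t)) p *
              V (Function.update ζ j t) v := by
        funext t; simp
      rw [e1]
      have e2 : Dop j (p * MvPolynomial.X v)
          = p * dvar j v + MvPolynomial.X v * Dop j p := by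
        rw [Derivation.leibniz]
        simp [Dop, MvPolynomial.mkDerivation_X, smul_eq_mul]
      have e3 : MvPolynomial.eval (V (Function.update ζ j t₀)) (Dop j (p * MvPolynomial.X v))
          = MvPolynomial.eval (V (Function.update ζ j t₀)) (Dop j p) *
              V (Function.update ζ j t₀) v +
            MvPolynomial.eval (V (Function.update ζ j t₀)) p *
              MvPolynomial.eval (V (Function.update ζ j t₀)) (dvar j v) := by
        rw [e2]
        simp [MvPolynomial.eval_X]
        ring
      rw [e3]
      exact h2

lemma mixedPartial_eq {n : ℕ} (Q : MvPolynomial (Var n) ℂ) :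
    ∀ (J : List (Fin n)) (ζ : Fin n → ℂ),
      mixedPartial J (fun ξ => MvPolynomial.eval (V ξ) Q) ζ
        = MvPolynomial.eval (V ζ) (J.foldr (fun j R => Dop j R) Q) := by
  intro J
  induction J with
  | nil => intro ζ; rfl
  | cons i l ih =>
      intro ζ
      show deriv (fun t => mixedPartial l (fun ξ => MvPolynomial.eval (V ξ) Q)
        (Function.update ζ i t)) (ζ i) = _
      have h1 : (fun t => mixedPartial l (fun ξ => MvPolynomial.eval (V ξ) Q)
            (Function.update ζ i t))
          = fun t => MvPolynomial.eval (V (Function.update ζ i t))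
              (l.foldr (fun j R => Dop j R) Q) := by
        funext t; exact ih _
      rw [h1, (hasDerivAt_eval _ ζ i (ζ i)).deriv, Function.update_eq_self]
      rfl

lemma evalLaurent_eq {n : ℕ} (P : MvPolynomial K ℂ) :
    (evalLaurent P : (Fin n → ℂ) → ℂ)
      = fun ζ => MvPolynomial.eval (V ζ) (MvPolynomial.rename Sum.inl P) := by
  funext ζ
  rw [evalLaurent, MvPolynomial.eval_rename]
  rfl

/-! ### Elementary real estimates -/

lemma exp_abs_le (x : ℝ) : Real.exp |x| ≤ 2 * Real.cosh x := by
  rw [Real.cosh_eq]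
  rcases abs_cases x with ⟨h, _⟩ | ⟨h, _⟩
  · rw [h]; nlinarith [Real.exp_pos (-x)]
  · rw [h]; nlinarith [Real.exp_pos x]

lemma exp_int_mul_le (k : ℤ) (x : ℝ) :
    Real.exp ((k : ℝ) * x) ≤ (2 * Real.cosh x) ^ k.natAbs := by
  have h1 : (k : ℝ) * x ≤ (k.natAbs : ℝ) * |x| := by
    calc (k : ℝ) * x ≤ |(k : ℝ) * x| := le_abs_self _
      _ = |(k : ℝ)| * |x| := abs_mul _ _
      _ = (k.natAbs : ℝ) * |x| := by
          rw [Nat.cast_natAbs]; push_cast; ring_nf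
  calc Real.exp ((k : ℝ) * x) ≤ Real.exp ((k.natAbs : ℝ) * |x|) := Real.exp_le_exp.2 h1
    _ = Real.exp |x| ^ k.natAbs := by rw [← Real.exp_nat_mul]
    _ ≤ (2 * Real.cosh x) ^ k.natAbs :=
        pow_le_pow_left₀ (Real.exp_nonneg _) (exp_abs_le x) _

lemma cosh_le_exp_one_mul {x y : ℝ} (h : |x - y| ≤ 1) :
    Real.cosh x ≤ Real.exp 1 * Real.cosh y := by
  have hx : x = y + (x - y) := by ring
  set d := x - y with hd
  have habs : |Real.sinh y| ≤ Real.cosh y := by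
    nlinarith [Real.cosh_sq y, Real.cosh_pos y, abs_nonneg (Real.sinh y),
      sq_abs (Real.sinh y)]
  calc Real.cosh x = Real.cosh y * Real.cosh d + Real.sinh y * Real.sinh d := by
        rw [hx, Real.cosh_add]
    _ ≤ Real.cosh y * Real.cosh d + |Real.sinh y| * |Real.sinh d| := by
        have := le_abs_self (Real.sinh y * Real.sinh d)
        rw [abs_mul] at this
        linarith
    _ ≤ Real.cosh y * Real.cosh d + Real.cosh y * |Real.sinh d| := by
        have : |Real.sinh y| * |Real.sinh d| ≤ Real.cosh y * |Real.sinh d| :=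
          mul_le_mul_of_nonneg_right habs (abs_nonneg _)
        linarith
    _ = Real.cosh y * (Real.cosh |d| + Real.sinh |d|) := by
        rw [Real.cosh_abs, Real.abs_sinh]; ring
    _ = Real.cosh y * Real.exp |d| := by rw [Real.cosh_add_sinh]
    _ ≤ Real.cosh y * Real.exp 1 := by
        exact mul_le_mul_of_nonneg_left (Real.exp_le_exp.2 h) ((Real.cosh_pos _).le)
    _ = Real.exp 1 * Real.cosh y := by ring

/-- The weight of a monomial: `Σ (|k|+1) * multiplicity`. -/
def wt (d : K →₀ ℕ) : ℕ := d.sum fun k m => (k.1.natAbs + 1) * m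

/-! ### The basic bound on `evalLaurent` -/

lemma base_bound (P : MvPolynomial K ℂ) {n : ℕ} (hn : 1 ≤ n) (ζ : Fin n → ℂ) :
    ‖evalLaurent P ζ‖ ≤ (∑ d ∈ P.support, ‖MvPolynomial.coeff d P‖) *
      (2 * ∑ j : Fin n, Real.cosh (ζ j).re) ^ (P.support.sup wt) := by
  set E := ∑ j : Fin n, Real.cosh (ζ j).re with hE
  have hcosh : ∀ j : Fin n, Real.cosh (ζ j).re ≤ E := fun j =>
    Finset.single_le_sum (f := fun j : Fin n => Real.cosh (ζ j).re)
      (fun j' _ => (Real.cosh_pos (ζ j').re).le) (mem_univ j)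
  have hnE : (n : ℝ) ≤ E := by
    calc (n : ℝ) = ∑ _j : Fin n, (1 : ℝ) := by simp
      _ ≤ E := Finset.sum_le_sum fun j _ => Real.one_le_cosh _
  have h1E : (1 : ℝ) ≤ E := le_trans (by exact_mod_cast hn) hnE
  have h12E : (1 : ℝ) ≤ 2 * E := by linarith
  -- bound each power sum
  have hps : ∀ k : K, ‖∑ j : Fin n, Complex.exp ((k.1 : ℂ) * ζ j)‖
      ≤ (2 * E) ^ (k.1.natAbs + 1) := by
    intro k
    calc ‖∑ j : Fin n, Complex.exp ((k.1 : ℂ) * ζ j)‖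
        ≤ ∑ j : Fin n, ‖Complex.exp ((k.1 : ℂ) * ζ j)‖ := norm_sum_le _ _
      _ ≤ ∑ _j : Fin n, (2 * E) ^ k.1.natAbs := by
          refine Finset.sum_le_sum fun j _ => ?_
          rw [Complex.norm_exp]
          have hre : ((k.1 : ℂ) * ζ j).re = (k.1 : ℝ) * (ζ j).re := by
            simp [Complex.mul_re]
          rw [hre]
          calc Real.exp ((k.1 : ℝ) * (ζ j).re)
              ≤ (2 * Real.cosh (ζ j).re) ^ k.1.natAbs := exp_int_mul_le _ _
            _ ≤ (2 * E) ^ k.1.natAbs := by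
                refine pow_le_pow_left₀ (by positivity) (by linarith [hcosh j]) _
      _ = (n : ℝ) * (2 * E) ^ k.1.natAbs := by simp [mul_comm]
      _ ≤ (2 * E) * (2 * E) ^ k.1.natAbs := by
          refine mul_le_mul_of_nonneg_right (by linarith) (by positivity)
      _ = (2 * E) ^ (k.1.natAbs + 1) := by rw [pow_succ]; ring
  rw [evalLaurent, MvPolynomial.eval_eq]
  calc ‖∑ d ∈ P.support, MvPolynomial.coeff d P *
        ∏ k ∈ d.support, (∑ j : Fin n, Complex.exp ((k.1 : ℂ) * ζ j)) ^ d k‖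
      ≤ ∑ d ∈ P.support, ‖MvPolynomial.coeff d P‖ *
          ∏ k ∈ d.support, ‖∑ j : Fin n, Complex.exp ((k.1 : ℂ) * ζ j)‖ ^ d k := by
        refine (norm_sum_le _ _).trans (Finset.sum_le_sum fun d _ => ?_)
        rw [norm_mul]
        refine mul_le_mul_of_nonneg_left ?_ (norm_nonneg _)
        rw [norm_prod]
        refine le_of_eq (Finset.prod_congr rfl fun k _ => ?_)
        rw [norm_pow]
    _ ≤ ∑ d ∈ P.support, ‖MvPolynomial.coeff d P‖ * (2 * E) ^ (P.support.sup wt) := by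
        refine Finset.sum_le_sum fun d hd => ?_
        refine mul_le_mul_of_nonneg_left ?_ (norm_nonneg _)
        calc ∏ k ∈ d.support, ‖∑ j : Fin n, Complex.exp ((k.1 : ℂ) * ζ j)‖ ^ d k
            ≤ ∏ k ∈ d.support, ((2 * E) ^ (k.1.natAbs + 1)) ^ d k := by
              refine Finset.prod_le_prod (fun k _ => by positivity) fun k _ => ?_
              exact pow_le_pow_left₀ (norm_nonneg _) (hps k) _
          _ = ∏ k ∈ d.support, (2 * E) ^ ((k.1.natAbs + 1) * d k) := by
              refine Finset.prod_congr rfl fun k _ => ?_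
              rw [← pow_mul]
          _ = (2 * E) ^ wt d := by
              rw [Finset.prod_pow_eq_pow_sum]
              rfl
          _ ≤ (2 * E) ^ (P.support.sup wt) :=
              pow_le_pow_right₀ h12E (Finset.le_sup hd)
    _ = (∑ d ∈ P.support, ‖MvPolynomial.coeff d P‖) * (2 * E) ^ (P.support.sup wt) := by
        rw [Finset.sum_mul]

/-! ### The inductive bound on mixed partials -/

lemma main_bound (P : MvPolynomial K ℂ) {n : ℕ} (hn : 1 ≤ n) :
    ∀ (J : List (Fin n)) (ζ : Fin n → ℂ),
      ‖mixedPartial J (evalLaurent P) ζ‖ ≤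
        (∑ d ∈ P.support, ‖MvPolynomial.coeff d P‖) * 2 ^ (P.support.sup wt) *
          (Real.exp 1 ^ (P.support.sup wt)) ^ J.length *
          (∑ j : Fin n, Real.cosh (ζ j).re) ^ (P.support.sup wt) := by
  set C₀ := ∑ d ∈ P.support, ‖MvPolynomial.coeff d P‖ with hC₀
  set B := P.support.sup wt with hB
  intro J
  induction J with
  | nil =>
      intro ζ
      have := base_bound P hn ζ
      calc ‖mixedPartial [] (evalLaurent P) ζ‖ = ‖evalLaurent P ζ‖ := rfl
        _ ≤ C₀ * (2 * ∑ j : Fin n, Real.cosh (ζ j).re) ^ B := this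
        _ = C₀ * 2 ^ B * (Real.exp 1 ^ B) ^ ([] : List (Fin n)).length *
            (∑ j : Fin n, Real.cosh (ζ j).re) ^ B := by
            rw [mul_pow]; simp; ring
  | cons i l ih =>
      intro ζ
      set Q := (MvPolynomial.rename (Sum.inl : K → Var n) P) with hQ
      set Ql := l.foldr (fun j R => Dop j R) Q with hQl
      have hrep : ∀ ξ : Fin n → ℂ, mixedPartial l (evalLaurent P) ξ
          = MvPolynomial.eval (V ξ) Ql := by
        intro ξ
        rw [evalLaurent_eq P]
        exact mixedPartial_eq Q l ξ
      have hfun : (fun t => mixedPartial l (evalLaurent P) (Function.update ζ i t))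
          = fun t => MvPolynomial.eval (V (Function.update ζ i t)) Ql := by
        funext t; exact hrep _
      have hmp : mixedPartial (i :: l) (evalLaurent P) ζ
          = deriv (fun t => MvPolynomial.eval (V (Function.update ζ i t)) Ql) (ζ i) := by
        show deriv (fun t => mixedPartial l (evalLaurent P) (Function.update ζ i t)) (ζ i) = _
        rw [hfun]
      rw [hmp]
      have hdiff : Differentiable ℂ
          (fun t => MvPolynomial.eval (V (Function.update ζ i t)) Ql) := fun t =>
        (hasDerivAt_eval Ql ζ i t).differentiableAt
      have hC : ∀ z ∈ Metric.sphere (ζ i) 1,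
          ‖MvPolynomial.eval (V (Function.update ζ i z)) Ql‖ ≤
            C₀ * 2 ^ B * (Real.exp 1 ^ B) ^ l.length * Real.exp 1 ^ B *
              (∑ j : Fin n, Real.cosh (ζ j).re) ^ B := by
        intro z hz
        have hsz : ‖z - ζ i‖ = 1 := by
          simpa [Metric.mem_sphere, dist_eq_norm] using hz
        have hEup : (∑ j : Fin n, Real.cosh ((Function.update ζ i z j).re))
            ≤ Real.exp 1 * ∑ j : Fin n, Real.cosh ((ζ j).re) := by
          rw [Finset.mul_sum]
          refine Finset.sum_le_sum fun j _ => ?_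
          by_cases hj : j = i
          · subst hj
            rw [Function.update_self]
            refine cosh_le_exp_one_mul ?_
            calc |z.re - (ζ j).re| = |(z - ζ j).re| := by rw [Complex.sub_re]
              _ ≤ ‖z - ζ j‖ := Complex.abs_re_le_norm _
              _ = 1 := hsz
          · rw [Function.update_of_ne hj]
            exact le_mul_of_one_le_left ((Real.cosh_pos _).le) (Real.one_le_exp zero_le_one)
        calc ‖MvPolynomial.eval (V (Function.update ζ i z)) Ql‖
            = ‖mixedPartial l (evalLaurent P) (Function.update ζ i z)‖ := by
              rw [hrep]
          _ ≤ C₀ * 2 ^ B * (Real.exp 1 ^ B) ^ l.length *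
                (∑ j : Fin n, Real.cosh ((Function.update ζ i z j).re)) ^ B :=
              ih (Function.update ζ i z)
          _ ≤ C₀ * 2 ^ B * (Real.exp 1 ^ B) ^ l.length *
                (Real.exp 1 * ∑ j : Fin n, Real.cosh ((ζ j).re)) ^ B := by
              have h0 : (0:ℝ) ≤ C₀ := Finset.sum_nonneg fun d _ => norm_nonneg _
              refine mul_le_mul_of_nonneg_left ?_ ?_
              · exact pow_le_pow_left₀ (Finset.sum_nonneg fun j _ => (Real.cosh_pos _).le)
                  hEup _
              · exact mul_nonneg (mul_nonneg h0 (by positivity)) (by positivity)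
          _ = C₀ * 2 ^ B * (Real.exp 1 ^ B) ^ l.length * Real.exp 1 ^ B *
                (∑ j : Fin n, Real.cosh ((ζ j).re)) ^ B := by
              rw [mul_pow]; ring
      have hest := Complex.norm_deriv_le_of_forall_mem_sphere_norm_le one_pos
        (hdiff.diffContOnCl) hC
      rw [div_one] at hest
      calc ‖deriv (fun t => MvPolynomial.eval (V (Function.update ζ i t)) Ql) (ζ i)‖
          ≤ C₀ * 2 ^ B * (Real.exp 1 ^ B) ^ l.length * Real.exp 1 ^ B *
              (∑ j : Fin n, Real.cosh ((ζ j).re)) ^ B := hest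
        _ = C₀ * 2 ^ B * (Real.exp 1 ^ B) ^ (i :: l).length *
              (∑ j : Fin n, Real.cosh ((ζ j).re)) ^ B := by
            rw [List.length_cons, pow_succ]; ring

end LaurentAux

/-- For any symmetric Laurent polynomial `P` there are constants `a, b > 0`
such that for all `n ≥ 1`, all `ζ ∈ ℂⁿ` and every set `J` of coordinates
(encoded as a duplicate-free list), `|∂_J P(e^ζ)| ≤ aⁿ · E(Re ζ)^b`, where
`E(θ) = Σ_j cosh θ_j`. -/
theorem laurent_mixed_partial_bound (P : MvPolynomial {k : ℤ // k ≠ 0} ℂ) :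
    ∃ a > (0 : ℝ), ∃ b > (0 : ℝ), ∀ n : ℕ, 1 ≤ n → ∀ ζ : Fin n → ℂ,
      ∀ J : List (Fin n), J.Nodup →
        ‖mixedPartial J (evalLaurent P) ζ‖
          ≤ a ^ n * (∑ j : Fin n, Real.cosh (ζ j).re) ^ b := by
  classical
  set C₀ := ∑ d ∈ P.support, ‖MvPolynomial.coeff d P‖ with hC₀
  set B := P.support.sup LaurentAux.wt with hB
  have hC₀0 : (0 : ℝ) ≤ C₀ := Finset.sum_nonneg fun d _ => norm_nonneg _
  refine ⟨(C₀ + 1) * 2 ^ B * Real.exp 1 ^ B, by positivity, (B : ℝ) + 1, by positivity,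
    ?_⟩
  intro n hn ζ J hJ
  have hE1 : (1 : ℝ) ≤ ∑ j : Fin n, Real.cosh (ζ j).re := by
    calc (1 : ℝ) ≤ (n : ℝ) := by exact_mod_cast hn
      _ = ∑ _j : Fin n, (1 : ℝ) := by simp
      _ ≤ _ := Finset.sum_le_sum fun j _ => Real.one_le_cosh _
  set E := ∑ j : Fin n, Real.cosh (ζ j).re with hE
  have hmain := LaurentAux.main_bound P hn J ζ
  have hlen : J.length ≤ n := by
    have := hJ.length_le_card
    simpa using this
  have h1 : C₀ * 2 ^ B * (Real.exp 1 ^ B) ^ J.length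
      ≤ ((C₀ + 1) * 2 ^ B * Real.exp 1 ^ B) ^ n := by
    have he1 : (1 : ℝ) ≤ Real.exp 1 ^ B := one_le_pow₀ (Real.one_le_exp zero_le_one)
    have h2B : (1 : ℝ) ≤ (2 : ℝ) ^ B := one_le_pow₀ (one_le_two : (1:ℝ) ≤ 2)
    calc C₀ * 2 ^ B * (Real.exp 1 ^ B) ^ J.length
        ≤ (C₀ + 1) * 2 ^ B * (Real.exp 1 ^ B) ^ n := by
          refine mul_le_mul ?_ ?_ (by positivity) (by positivity)
          · exact mul_le_mul (by linarith) le_rfl (by positivity) (by linarith)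
          · exact pow_le_pow_right₀ he1 hlen
      _ ≤ ((C₀ + 1) ^ n) * ((2 : ℝ) ^ B) ^ n * (Real.exp 1 ^ B) ^ n := by
          refine mul_le_mul_of_nonneg_right ?_ (by positivity)
          refine mul_le_mul ?_ ?_ (by positivity) (by positivity)
          · exact le_self_pow₀ (by linarith) (by omega)
          · exact le_self_pow₀ (by linarith) (by omega)
      _ = ((C₀ + 1) * 2 ^ B * Real.exp 1 ^ B) ^ n := by
          rw [mul_pow, mul_pow]
  have h2 : E ^ B ≤ E ^ ((B : ℝ) + 1) := by
    rw [← Real.rpow_natCast E B]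
    exact Real.rpow_le_rpow_of_exponent_le hE1 (by linarith)
  calc ‖mixedPartial J (evalLaurent P) ζ‖
      ≤ C₀ * 2 ^ B * (Real.exp 1 ^ B) ^ J.length * E ^ B := hmain
    _ ≤ ((C₀ + 1) * 2 ^ B * Real.exp 1 ^ B) ^ n * E ^ ((B : ℝ) + 1) := by
        refine mul_le_mul h1 h2 (by positivity) (by positivity)
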